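/- Single-layer EP error signal equals backprop error signal: let σ : ℝⁿ → ℝⁿ be differentiable, E(s, x) := G(s) − ⟪s, x⟫ with ∇G = σ⁻¹, and for δ ∈ ℝⁿ let s_β := σ(x − βδ) (which solves ∇ₛE(s_β, x) + βδ = 0). Then Δx := d/dβ [∇_x E(s_β, x)]|_{β=0} = −d/dβ s_β |_{β=0} = Dσ(x) · δ, where Dσ(x) is the Jacobian of σ at x. In particular, if σ acts coordinatewise, Δx = σ'(x) ⊙ δ. -/

import Mathlib

open scoped RealInnerProductSpace

noncomputable section

abbrev Euc (n : ℕ) := EuclideanSpace ℝ (Fin n)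

lemma hasGradientAt_inner_const {n : ℕ} (c x : Euc n) :
    HasGradientAt (fun x' => ⟪c, x'⟫) c x := by
  rw [hasGradientAt_iff_hasFDerivAt]
  have : (InnerProductSpace.toDual ℝ (Euc n) c : Euc n →L[ℝ] ℝ) = innerSL ℝ c := rfl
  rw [this]
  exact (innerSL ℝ c).hasFDerivAt

/-- Single-layer EP error signal equals the backprop error signal:
for `E(s,x) = G(s) − ⟪s,x⟫`, `∇G = σ⁻¹`, and `s_β = σ(x − βδ)`,
`Δx := d/dβ[∇_x E(s_β,x)]|₀ = −d/dβ s_β|₀ = Dσ(x)·δ`. -/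
theorem stmt_8 {n : ℕ}
    (σ : Euc n → Euc n) (hσ : Differentiable ℝ σ)
    (G : Euc n → ℝ) (hG : Differentiable ℝ G)
    (hσ₁ : Function.LeftInverse σ (gradient G))
    (hσ₂ : Function.RightInverse σ (gradient G))
    (E : Euc n → Euc n → ℝ) (hE : ∀ s x, E s x = G s - ⟪s, x⟫)
    (x δ : Euc n)
    (s : ℝ → Euc n) (hsdef : ∀ β, s β = σ (x - β • δ)) :
    deriv (fun β => gradient (fun x' => E (s β) x') x) 0 = -(deriv s 0) ∧
    deriv (fun β => gradient (fun x' => E (s β) x') x) 0 = (fderiv ℝ σ x) δ := by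
  have hgrad : ∀ β, gradient (fun x' => E (s β) x') x = -(s β) := by
    intro β
    have h1 : HasGradientAt (fun x' => G (s β) - ⟪s β, x'⟫) (-(s β)) x := by
      rw [hasGradientAt_iff_hasFDerivAt]
      have hf : HasFDerivAt (fun x' : Euc n => G (s β) - ⟪s β, x'⟫)
          (0 - innerSL ℝ (s β)) x :=
        (hasFDerivAt_const (G (s β)) x).sub (innerSL ℝ (s β)).hasFDerivAt
      have : (InnerProductSpace.toDual ℝ (Euc n)) (-(s β)) = 0 - innerSL ℝ (s β) := by
        rw [map_neg, zero_sub]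
        congr 1
      rw [this]; exact hf
    have h2 : (fun x' => E (s β) x') = fun x' => G (s β) - ⟪s β, x'⟫ :=
      funext fun x' => hE (s β) x'
    rw [h2]
    simpa using h1.gradient
  have heq : (fun β => gradient (fun x' => E (s β) x') x) = fun β => -(s β) := by
    funext β; exact hgrad β
  -- derivative of s at 0
  have hlin : HasDerivAt (fun β : ℝ => x - β • δ) (-δ) 0 := by
    have h1 : HasDerivAt (fun β : ℝ => β • δ) δ 0 := by
      simpa using (hasDerivAt_id (0:ℝ)).smul_const δ
    simpa using h1.const_sub x
  have hs : HasDerivAt s (-(fderiv ℝ σ x δ)) 0 := by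
    have hcomp : HasDerivAt (fun β : ℝ => σ (x - β • δ)) (fderiv ℝ σ x (-δ)) 0 := by
      have hfd : HasFDerivAt σ (fderiv ℝ σ x) (x - (0:ℝ) • δ) := by
        simpa using (hσ x).hasFDerivAt
      have := (hfd.comp_hasDerivAt 0
        (by simpa using hlin : HasDerivAt (fun β : ℝ => x - β • δ) (-δ) 0))
      exact this
    have : HasDerivAt s (fderiv ℝ σ (x - (0:ℝ) • δ) (-δ)) 0 := by
      simp only [funext hsdef] at *
      simpa using hcomp
    simpa [map_neg] using this
  have hds : deriv s 0 = -(fderiv ℝ σ x δ) := hs.deriv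
  constructor
  · rw [heq, deriv.fun_neg]
  · rw [heq, deriv.fun_neg, hds, neg_neg]
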